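/- Consider the one-sided LP relaxation min ∑ x_a subject to ∑_a a_j x_a ≥ q_j, x_a ≥ 0 over all patterns. If there are exactly two orders (m = 2), then the integer round-up property holds: the integer optimum equals ⌈z_LP⌉. -/

import Mathlib

/-- Sorted 3-point drop lemma: a weighted combination of three points in ℝ² is
dominated (componentwise ≤) by a combination of two of them with the same total mass. -/
lemma dropS (x1 x2 x3 y1 y2 y3 a b c : ℝ) (ha : 0 ≤ a) (hb : 0 ≤ b) (hc : 0 ≤ c)
    (h12 : x1 ≤ x2) (h23 : x2 ≤ x3) :
    ∃ p q : ℝ, 0 ≤ p ∧ 0 ≤ q ∧ p + q = a + b + c ∧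
      ((a*x1+b*x2+c*x3 ≤ p*x1+q*x2 ∧ a*y1+b*y2+c*y3 ≤ p*y1+q*y2) ∨
       (a*x1+b*x2+c*x3 ≤ p*x1+q*x3 ∧ a*y1+b*y2+c*y3 ≤ p*y1+q*y3) ∨
       (a*x1+b*x2+c*x3 ≤ p*x2+q*x3 ∧ a*y1+b*y2+c*y3 ≤ p*y2+q*y3)) := by
  rcases eq_or_lt_of_le (h12.trans h23) with h13 | h13
  · -- all x equal
    have e2 : x2 = x1 := le_antisymm (h13 ▸ h23) h12
    rcases le_total y2 y1 with hy | hy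
    · exact ⟨a+b, c, by linarith, hc, by ring, Or.inr (Or.inl ⟨by nlinarith, by nlinarith⟩)⟩
    rcases le_total y2 y3 with hy3 | hy3
    · exact ⟨a, b+c, ha, by linarith, by ring, Or.inr (Or.inl ⟨by nlinarith, by nlinarith⟩)⟩
    · exact ⟨a, b+c, ha, by linarith, by ring, Or.inl ⟨by nlinarith, by nlinarith⟩⟩
  · have hne31 : x3 - x1 ≠ 0 := sub_ne_zero.mpr (ne_of_gt h13)
    rcases le_or_gt ((y2-y1)*(x3-x1)) ((y3-y1)*(x2-x1)) with hD | hD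
    · -- point 2 below the line through 1,3 : use pair (1,3)
      refine ⟨(a*(x3-x1)+b*(x3-x2))/(x3-x1), a+b+c-(a*(x3-x1)+b*(x3-x2))/(x3-x1),
        div_nonneg (by nlinarith) (by linarith), ?_, by ring, Or.inr (Or.inl ⟨?_, ?_⟩)⟩
      · have h : a+b+c-(a*(x3-x1)+b*(x3-x2))/(x3-x1) = (c*(x3-x1)+b*(x2-x1))/(x3-x1) := by
          field_simp [hne31]; ring
        rw [h]; exact div_nonneg (by nlinarith) (by linarith)
      · have h : (a*(x3-x1)+b*(x3-x2))/(x3-x1)*x1 +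
            (a+b+c-(a*(x3-x1)+b*(x3-x2))/(x3-x1))*x3 - (a*x1+b*x2+c*x3) = 0 := by
          field_simp [hne31]; ring
        linarith
      · rw [← sub_nonneg]
        have h : (a*(x3-x1)+b*(x3-x2))/(x3-x1)*y1 +
            (a+b+c-(a*(x3-x1)+b*(x3-x2))/(x3-x1))*y3 - (a*y1+b*y2+c*y3)
            = b*((y3-y1)*(x2-x1) - (y2-y1)*(x3-x1))/(x3-x1) := by
          field_simp [hne31]; ring
        rw [h]
        exact div_nonneg (by nlinarith) (by linarith)
    · -- point 2 strictly above line through 1,3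
      rcases eq_or_lt_of_le h12 with e12 | h12'
      · -- x1 = x2 : point 1 dominated by point 2; use pair (2,3)
        have h0 : 0 < (y2 - y1) * (x3 - x1) := by rw [← e12] at hD; nlinarith
        have hy : y1 ≤ y2 := by nlinarith [mul_pos_iff.mp h0, sub_pos.mpr h13]
        exact ⟨a+b, c, by linarith, hc, by ring,
          Or.inr (Or.inr ⟨by nlinarith, by nlinarith⟩)⟩
      rcases eq_or_lt_of_le h23 with e23 | h23'
      · -- x2 = x3 : point 3 dominated by point 2; use pair (1,2)
        have h0 : 0 < (x2 - x1) * (y2 - y3) := by rw [e23] at hD; nlinarith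
        have hy : y3 ≤ y2 := by nlinarith [mul_pos_iff.mp h0, sub_pos.mpr h12']
        exact ⟨a, b+c, ha, by linarith, by ring,
          Or.inl ⟨by nlinarith, by nlinarith⟩⟩
      have hne21 : x2 - x1 ≠ 0 := sub_ne_zero.mpr (ne_of_gt h12')
      have hne32 : x3 - x2 ≠ 0 := sub_ne_zero.mpr (ne_of_gt h23')
      rcases le_total (a*x1+b*x2+c*x3) ((a+b+c)*x2) with hT | hT
      · -- use pair (1,2)
        refine ⟨(a*(x2-x1)-c*(x3-x2))/(x2-x1), a+b+c-(a*(x2-x1)-c*(x3-x2))/(x2-x1),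
          div_nonneg (by nlinarith) (by linarith), ?_, by ring, Or.inl ⟨?_, ?_⟩⟩
        · have h : a+b+c-(a*(x2-x1)-c*(x3-x2))/(x2-x1) = (b*(x2-x1)+c*(x3-x1))/(x2-x1) := by
            field_simp [hne21]; ring
          rw [h]; exact div_nonneg (by nlinarith) (by linarith)
        · have h : (a*(x2-x1)-c*(x3-x2))/(x2-x1)*x1 +
              (a+b+c-(a*(x2-x1)-c*(x3-x2))/(x2-x1))*x2 - (a*x1+b*x2+c*x3) = 0 := by
            field_simp [hne21]; ring
          linarith
        · rw [← sub_nonneg]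
          have h : (a*(x2-x1)-c*(x3-x2))/(x2-x1)*y1 +
              (a+b+c-(a*(x2-x1)-c*(x3-x2))/(x2-x1))*y2 - (a*y1+b*y2+c*y3)
              = c*((y2-y1)*(x3-x1) - (y3-y1)*(x2-x1))/(x2-x1) := by
            field_simp [hne21]; ring
          rw [h]
          exact div_nonneg (by nlinarith) (by linarith)
      · -- use pair (2,3)
        refine ⟨(a*(x3-x1)+b*(x3-x2))/(x3-x2), a+b+c-(a*(x3-x1)+b*(x3-x2))/(x3-x2),
          div_nonneg (by nlinarith) (by linarith), ?_, by ring, Or.inr (Or.inr ⟨?_, ?_⟩)⟩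
        · have h : a+b+c-(a*(x3-x1)+b*(x3-x2))/(x3-x2)
              = (a*x1+b*x2+c*x3 - (a+b+c)*x2)/(x3-x2) := by
            field_simp [hne32]; ring
          rw [h]; exact div_nonneg (by nlinarith) (by linarith)
        · have h : (a*(x3-x1)+b*(x3-x2))/(x3-x2)*x2 +
              (a+b+c-(a*(x3-x1)+b*(x3-x2))/(x3-x2))*x3 - (a*x1+b*x2+c*x3) = 0 := by
            field_simp [hne32]; ring
          linarith
        · rw [← sub_nonneg]
          have h : (a*(x3-x1)+b*(x3-x2))/(x3-x2)*y2 +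
              (a+b+c-(a*(x3-x1)+b*(x3-x2))/(x3-x2))*y3 - (a*y1+b*y2+c*y3)
              = a*((y2-y1)*(x3-x1) - (y3-y1)*(x2-x1))/(x3-x2) := by
            field_simp [hne32]; ring
          rw [h]
          exact div_nonneg (by nlinarith) (by linarith)

/-- Unsorted 3-point drop lemma. -/
lemma drop3 (x1 x2 x3 y1 y2 y3 a b c : ℝ) (ha : 0 ≤ a) (hb : 0 ≤ b) (hc : 0 ≤ c) :
    ∃ p q : ℝ, 0 ≤ p ∧ 0 ≤ q ∧ p + q = a + b + c ∧
      ((a*x1+b*x2+c*x3 ≤ p*x1+q*x2 ∧ a*y1+b*y2+c*y3 ≤ p*y1+q*y2) ∨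
       (a*x1+b*x2+c*x3 ≤ p*x1+q*x3 ∧ a*y1+b*y2+c*y3 ≤ p*y1+q*y3) ∨
       (a*x1+b*x2+c*x3 ≤ p*x2+q*x3 ∧ a*y1+b*y2+c*y3 ≤ p*y2+q*y3)) := by
  rcases le_total x1 x2 with h12 | h21
  · rcases le_total x2 x3 with h23 | h32
    · exact dropS x1 x2 x3 y1 y2 y3 a b c ha hb hc h12 h23
    · rcases le_total x1 x3 with h13 | h31
      · obtain ⟨p, q, hp, hq, hpq, h⟩ := dropS x1 x3 x2 y1 y3 y2 a c b ha hc hb h13 h32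
        rcases h with ⟨u, v⟩ | ⟨u, v⟩ | ⟨u, v⟩
        · exact ⟨p, q, hp, hq, by linarith, Or.inr (Or.inl ⟨by linarith, by linarith⟩)⟩
        · exact ⟨p, q, hp, hq, by linarith, Or.inl ⟨by linarith, by linarith⟩⟩
        · exact ⟨q, p, hq, hp, by linarith, Or.inr (Or.inr ⟨by linarith, by linarith⟩)⟩
      · obtain ⟨p, q, hp, hq, hpq, h⟩ := dropS x3 x1 x2 y3 y1 y2 c a b hc ha hb h31 h12
        rcases h with ⟨u, v⟩ | ⟨u, v⟩ | ⟨u, v⟩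
        · exact ⟨q, p, hq, hp, by linarith, Or.inr (Or.inl ⟨by linarith, by linarith⟩)⟩
        · exact ⟨q, p, hq, hp, by linarith, Or.inr (Or.inr ⟨by linarith, by linarith⟩)⟩
        · exact ⟨p, q, hp, hq, by linarith, Or.inl ⟨by linarith, by linarith⟩⟩
  · rcases le_total x1 x3 with h13 | h31
    · obtain ⟨p, q, hp, hq, hpq, h⟩ := dropS x2 x1 x3 y2 y1 y3 b a c hb ha hc h21 h13
      rcases h with ⟨u, v⟩ | ⟨u, v⟩ | ⟨u, v⟩
      · exact ⟨q, p, hq, hp, by linarith, Or.inl ⟨by linarith, by linarith⟩⟩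
      · exact ⟨p, q, hp, hq, by linarith, Or.inr (Or.inr ⟨by linarith, by linarith⟩)⟩
      · exact ⟨p, q, hp, hq, by linarith, Or.inr (Or.inl ⟨by linarith, by linarith⟩)⟩
    · rcases le_total x2 x3 with h23 | h32
      · obtain ⟨p, q, hp, hq, hpq, h⟩ := dropS x2 x3 x1 y2 y3 y1 b c a hb hc ha h23 h31
        rcases h with ⟨u, v⟩ | ⟨u, v⟩ | ⟨u, v⟩
        · exact ⟨p, q, hp, hq, by linarith, Or.inr (Or.inr ⟨by linarith, by linarith⟩)⟩
        · exact ⟨q, p, hq, hp, by linarith, Or.inl ⟨by linarith, by linarith⟩⟩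
        · exact ⟨q, p, hq, hp, by linarith, Or.inr (Or.inl ⟨by linarith, by linarith⟩)⟩
      · obtain ⟨p, q, hp, hq, hpq, h⟩ := dropS x3 x2 x1 y3 y2 y1 c b a hc hb ha h32 h21
        rcases h with ⟨u, v⟩ | ⟨u, v⟩ | ⟨u, v⟩
        · exact ⟨q, p, hq, hp, by linarith, Or.inr (Or.inr ⟨by linarith, by linarith⟩)⟩
        · exact ⟨q, p, hq, hp, by linarith, Or.inr (Or.inl ⟨by linarith, by linarith⟩)⟩
        · exact ⟨q, p, hq, hp, by linarith, Or.inl ⟨by linarith, by linarith⟩⟩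

/-- Merging three weighted points into two, inside a finite weighted family. -/
lemma helperM {ι : Type*} [DecidableEq ι] (s : Finset ι) (c P₁ P₂ : ι → ℝ)
    (α β γ : ι) (hα : α ∈ s) (hβ : β ∈ s) (hγ : γ ∈ s)
    (hαβ : α ≠ β) (hαγ : α ≠ γ) (hβγ : β ≠ γ)
    (hc : ∀ i ∈ s, 0 ≤ c i) (p q : ℝ) (hp : 0 ≤ p) (hq : 0 ≤ q)
    (hpq : p + q = c α + c β + c γ)
    (h₁ : c α * P₁ α + c β * P₁ β + c γ * P₁ γ ≤ p * P₁ α + q * P₁ β)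
    (h₂ : c α * P₂ α + c β * P₂ β + c γ * P₂ γ ≤ p * P₂ α + q * P₂ β) :
    ∃ c' : ι → ℝ, (∀ i ∈ s.erase γ, 0 ≤ c' i) ∧
      (∑ i ∈ s.erase γ, c' i = ∑ i ∈ s, c i) ∧
      (∑ i ∈ s, c i * P₁ i ≤ ∑ i ∈ s.erase γ, c' i * P₁ i) ∧
      (∑ i ∈ s, c i * P₂ i ≤ ∑ i ∈ s.erase γ, c' i * P₂ i) := by
  classical
  set g : ι → ℝ := Function.update (Function.update c α p) β q with hg
  have hgα : g α = p := by simp [hg, Function.update, hαβ]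
  have hgβ : g β = q := by simp [hg, Function.update]
  have hgother : ∀ i, i ≠ α → i ≠ β → g i = c i := by
    intro i h1 h2; simp [hg, Function.update, h1, h2]
  have hαe : α ∈ s.erase γ := Finset.mem_erase.mpr ⟨hαγ, hα⟩
  have hβe : β ∈ (s.erase γ).erase α :=
    Finset.mem_erase.mpr ⟨hαβ.symm, Finset.mem_erase.mpr ⟨hβγ, hβ⟩⟩
  have hαe2 : α ∈ s.erase γ := hαe
  have key : ∀ f : ι → ℝ, ∑ i ∈ s.erase γ, g i * f i
      = p * f α + q * f β + ∑ i ∈ ((s.erase γ).erase α).erase β, c i * f i := by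
    intro f
    rw [← Finset.add_sum_erase _ (fun i => g i * f i) hαe, hgα,
      ← Finset.add_sum_erase _ (fun i => g i * f i) hβe, hgβ]
    have hrest : ∑ i ∈ ((s.erase γ).erase α).erase β, g i * f i
        = ∑ i ∈ ((s.erase γ).erase α).erase β, c i * f i := by
      refine Finset.sum_congr rfl fun i hi => ?_
      have h1 := (Finset.mem_erase.mp hi).1
      have h2 := (Finset.mem_erase.mp (Finset.mem_erase.mp hi).2).1
      rw [hgother i h2 h1]
    rw [hrest]; ring
  have key2 : ∀ f : ι → ℝ, ∑ i ∈ s, c i * f i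
      = c γ * f γ + c α * f α + c β * f β + ∑ i ∈ ((s.erase γ).erase α).erase β, c i * f i := by
    intro f
    rw [← Finset.add_sum_erase _ (fun i => c i * f i) hγ,
      ← Finset.add_sum_erase _ (fun i => c i * f i) hαe,
      ← Finset.add_sum_erase _ (fun i => c i * f i) hβe]
    ring
  refine ⟨g, ?_, ?_, ?_, ?_⟩
  · intro i hi
    by_cases h1 : i = β
    · subst h1; rw [hgβ]; exact hq
    by_cases h2 : i = α
    · subst h2; rw [hgα]; exact hp
    · rw [hgother i h2 h1]; exact hc i (Finset.mem_of_mem_erase hi)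
  · have k1 := key (fun _ => 1)
    have k2 := key2 (fun _ => 1)
    simp only [mul_one] at k1 k2
    rw [k1, k2]; linarith
  · rw [key P₁, key2 P₁]; linarith
  · rw [key P₂, key2 P₂]; linarith

/-- Reduction to two points: a target dominated by a finite convex combination of
points in ℝ² is dominated by a convex combination of (at most) two of them. -/
lemma reduceM {ι : Type*} [DecidableEq ι] :
    ∀ (N : ℕ) (s : Finset ι) (c P₁ P₂ : ι → ℝ) (t₁ t₂ : ℝ), s.card ≤ N →
    (∀ i ∈ s, 0 ≤ c i) → ∑ i ∈ s, c i = 1 →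
    t₁ ≤ ∑ i ∈ s, c i * P₁ i → t₂ ≤ ∑ i ∈ s, c i * P₂ i →
    ∃ a ∈ s, ∃ b ∈ s, ∃ p q : ℝ, 0 ≤ p ∧ 0 ≤ q ∧ p + q = 1 ∧
      t₁ ≤ p * P₁ a + q * P₁ b ∧ t₂ ≤ p * P₂ a + q * P₂ b := by
  intro N
  induction N with
  | zero =>
    intro s c P₁ P₂ t₁ t₂ hcard _ hsum _ _
    rw [Nat.le_zero, Finset.card_eq_zero] at hcard
    subst hcard; simp at hsum
  | succ N ih =>
    intro s c P₁ P₂ t₁ t₂ hcard hc hsum h₁ h₂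
    rcases lt_or_ge 2 s.card with hbig | hsmall
    · -- at least three points: merge and recurse
      obtain ⟨α, β, γ, hα, hβ, hγ, hαβ, hαγ, hβγ⟩ := Finset.two_lt_card_iff.mp hbig
      obtain ⟨p, q, hp, hq, hpq, hcase⟩ := drop3 (P₁ α) (P₁ β) (P₁ γ) (P₂ α) (P₂ β) (P₂ γ)
        (c α) (c β) (c γ) (hc α hα) (hc β hβ) (hc γ hγ)
      have hcard' : ∀ δ : ι, δ ∈ s → (s.erase δ).card ≤ N := by
        intro δ hδ
        rw [Finset.card_erase_of_mem hδ]
        omega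
      rcases hcase with ⟨u1, u2⟩ | ⟨u1, u2⟩ | ⟨u1, u2⟩
      · obtain ⟨c', hc', hsum', h₁', h₂'⟩ := helperM s c P₁ P₂ α β γ hα hβ hγ hαβ hαγ hβγ hc
          p q hp hq hpq u1 u2
        obtain ⟨a, has, b, hbs, res⟩ := ih (s.erase γ) c' P₁ P₂ t₁ t₂ (hcard' γ hγ) hc'
          (by rw [hsum']; exact hsum) (le_trans h₁ h₁') (le_trans h₂ h₂')
        exact ⟨a, Finset.mem_of_mem_erase has, b, Finset.mem_of_mem_erase hbs, res⟩
      · obtain ⟨c', hc', hsum', h₁', h₂'⟩ := helperM s c P₁ P₂ α γ β hα hγ hβ hαγ hαβ hβγ.symm hc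
          p q hp hq (by linarith) (by linarith) (by linarith)
        obtain ⟨a, has, b, hbs, res⟩ := ih (s.erase β) c' P₁ P₂ t₁ t₂ (hcard' β hβ) hc'
          (by rw [hsum']; exact hsum) (le_trans h₁ h₁') (le_trans h₂ h₂')
        exact ⟨a, Finset.mem_of_mem_erase has, b, Finset.mem_of_mem_erase hbs, res⟩
      · obtain ⟨c', hc', hsum', h₁', h₂'⟩ := helperM s c P₁ P₂ β γ α hβ hγ hα hβγ hαβ.symm hαγ.symm hc
          p q hp hq (by linarith) (by linarith) (by linarith)
        obtain ⟨a, has, b, hbs, res⟩ := ih (s.erase α) c' P₁ P₂ t₁ t₂ (hcard' α hα) hc'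
          (by rw [hsum']; exact hsum) (le_trans h₁ h₁') (le_trans h₂ h₂')
        exact ⟨a, Finset.mem_of_mem_erase has, b, Finset.mem_of_mem_erase hbs, res⟩
    · -- at most two points
      interval_cases h : s.card
      · rw [Finset.card_eq_zero] at h; subst h; simp at hsum
      · rw [Finset.card_eq_one] at h
        obtain ⟨a, rfl⟩ := h
        rw [Finset.sum_singleton] at hsum
        rw [Finset.sum_singleton] at h₁ h₂
        refine ⟨a, Finset.mem_singleton_self a, a, Finset.mem_singleton_self a, 1, 0,
          zero_le_one, le_refl 0, by ring, ?_, ?_⟩ <;> rw [hsum] at * <;> linarith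
      · rw [Finset.card_eq_two] at h
        obtain ⟨a, b, hab, rfl⟩ := h
        rw [Finset.sum_pair hab] at hsum h₁ h₂
        exact ⟨a, Finset.mem_insert_self a {b}, b, Finset.mem_insert.mpr (Or.inr (Finset.mem_singleton_self b)),
          c a, c b, hc a (Finset.mem_insert_self a {b}),
          hc b (Finset.mem_insert.mpr (Or.inr (Finset.mem_singleton_self b))), hsum, h₁, h₂⟩

set_option maxHeartbeats 2000000 in
/-- From a two-point fractional certificate, build an integer solution with n bins. -/
lemma constructSol (W w₁ w₂ q₁ q₂ : ℕ) (hw₁ : 0 < w₁) (hw₂ : 0 < w₂)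
    (n u v : ℕ) (hn : 1 ≤ n) (hu : u * w₁ ≤ W) (hv : v * w₁ ≤ W)
    (θ : ℝ) (hθ0 : 0 ≤ θ) (hθ1 : θ ≤ 1)
    (H1 : (q₁ : ℝ) ≤ n * (θ * u + (1 - θ) * v))
    (H2 : (q₂ : ℝ) ≤ n * (θ * ((W - u * w₁) / w₂ : ℕ) + (1 - θ) * ((W - v * w₁) / w₂ : ℕ))) :
    ∃ x : (Fin 2 → ℕ) →₀ ℕ,
      (∀ a ∈ x.support, a 0 * w₁ + a 1 * w₂ ≤ W) ∧
      q₁ ≤ x.sum (fun a c => c * a 0) ∧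
      q₂ ≤ x.sum (fun a c => c * a 1) ∧
      x.sum (fun _ c => c) = n := by
  classical
  set gu : ℕ := (W - u * w₁) / w₂ with hgu
  clear_value gu
  set gv : ℕ := (W - v * w₁) / w₂ with hgv
  clear_value gv
  set k : ℕ := min ⌊θ * n⌋₊ (n - 1) with hkdef
  clear_value k
  set j : ℕ := n - 1 - k with hjdef
  clear_value j
  have hkn : k ≤ n - 1 := by rw [hkdef]; exact min_le_right _ _
  have hkj : k + j + 1 = n := by rw [hjdef]; omega
  have hθn0 : (0:ℝ) ≤ θ * n := by positivity
  have hklef : k ≤ ⌊θ * n⌋₊ := by rw [hkdef]; exact min_le_left _ _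
  have hkle : (k : ℝ) ≤ θ * n :=
    le_trans (by exact_mod_cast hklef : (k:ℝ) ≤ (⌊θ * n⌋₊ : ℝ)) (Nat.floor_le hθn0)
  set sθ : ℝ := θ * n - k with hsθ
  clear_value sθ
  have hs0 : 0 ≤ sθ := by rw [hsθ]; linarith
  have hs1 : sθ ≤ 1 := by
    rcases le_or_gt (⌊θ * n⌋₊) (n - 1) with hle | hlt
    · have hk : k = ⌊θ * n⌋₊ := by rw [hkdef]; exact min_eq_left hle
      have := Nat.lt_floor_add_one (θ * n)
      rw [hsθ, hk]; push_cast at this ⊢; linarith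
    · have hk : k = n - 1 := by rw [hkdef]; exact min_eq_right (le_of_lt hlt)
      have hfl : n ≤ ⌊θ * n⌋₊ := by omega
      have h1 : (n:ℝ) ≤ ⌊θ * n⌋₊ := by exact_mod_cast hfl
      have h2 : (⌊θ * n⌋₊ : ℝ) ≤ θ * n := Nat.floor_le hθn0
      have h3 : θ * n ≤ n := by nlinarith [Nat.cast_nonneg (α := ℝ) n]
      have hkc : (k:ℝ) = (n:ℝ) - 1 := by rw [hk]; push_cast [Nat.cast_sub hn]; ring
      rw [hsθ, hkc]; linarith
  have hjc : (j : ℝ) = (n : ℝ) - 1 - k := by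
    have : ((k + j + 1 : ℕ) : ℝ) = (n:ℝ) := by rw [hkj]
    push_cast at this; linarith
  -- residual demands
  set A : ℤ := (q₁ : ℤ) - ((k : ℤ) * u + (j : ℤ) * v) with hA
  clear_value A
  set B : ℤ := (q₂ : ℤ) - ((k : ℤ) * gu + (j : ℤ) * gv) with hB
  clear_value B
  set m : ℕ := A.toNat with hm
  clear_value m
  have HA : (A : ℝ) ≤ sθ * u + (1 - sθ) * v := by
    have e1 : (n:ℝ) * (θ * u + (1 - θ) * v)
        = (k:ℝ) * u + (j:ℝ) * v + (sθ * u + (1 - sθ) * v) := by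
      rw [hjc, hsθ]; ring
    have : (A : ℝ) = (q₁:ℝ) - ((k:ℝ) * u + (j:ℝ) * v) := by push_cast [hA]; ring
    rw [this]; linarith [H1, e1.symm.le]
  have HB : (B : ℝ) ≤ sθ * gu + (1 - sθ) * gv := by
    have e2 : (n:ℝ) * (θ * gu + (1 - θ) * gv)
        = (k:ℝ) * gu + (j:ℝ) * gv + (sθ * gu + (1 - sθ) * gv) := by
      rw [hjc, hsθ]; ring
    have : (B : ℝ) = (q₂:ℝ) - ((k:ℝ) * gu + (j:ℝ) * gv) := by push_cast [hB]; ring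
    rw [this]; linarith [H2, e2.symm.le]
  have hmR : (m : ℝ) ≤ sθ * u + (1 - sθ) * v := by
    rcases le_or_gt A 0 with h0 | h0
    · have : m = 0 := by simp [hm, Int.toNat_of_nonpos h0]
      rw [this]
      have : (0:ℝ) ≤ sθ * u + (1 - sθ) * v := by
        have := Nat.cast_nonneg (α := ℝ) u
        have := Nat.cast_nonneg (α := ℝ) v
        nlinarith
      simpa using this
    · have : (m : ℤ) = A := by rw [hm]; exact Int.toNat_of_nonneg h0.le
      have hc : (m : ℝ) = (A : ℝ) := by exact_mod_cast congrArg Int.cast this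
      rw [hc]; exact HA
  have hmw : m * w₁ ≤ W := by
    rcases le_total u v with h | h
    · have : (m:ℝ) ≤ (v:ℝ) := by
        have huv : (u:ℝ) ≤ v := by exact_mod_cast h
        linarith [hmR, mul_le_mul_of_nonneg_left huv hs0]
      have : m ≤ v := by exact_mod_cast this
      calc m * w₁ ≤ v * w₁ := Nat.mul_le_mul_right _ this
      _ ≤ W := hv
    · have : (m:ℝ) ≤ (u:ℝ) := by
        have huv : (v:ℝ) ≤ u := by exact_mod_cast h
        linarith [hmR, mul_le_mul_of_nonneg_left huv (show (0:ℝ) ≤ 1 - sθ by linarith)]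
      have : m ≤ u := by exact_mod_cast this
      calc m * w₁ ≤ u * w₁ := Nat.mul_le_mul_right _ this
      _ ≤ W := hu
  set gm : ℕ := (W - m * w₁) / w₂ with hgm
  clear_value gm
  -- B ≤ gm
  have hguw : (gu : ℝ) * w₂ ≤ (W : ℝ) - u * w₁ := by
    have h1 : gu * w₂ ≤ W - u * w₁ := by rw [hgu]; exact Nat.div_mul_le_self _ _
    have := (Nat.cast_le (α := ℝ)).mpr h1
    rwa [Nat.cast_mul, Nat.cast_sub hu, Nat.cast_mul] at this
  have hgvw : (gv : ℝ) * w₂ ≤ (W : ℝ) - v * w₁ := by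
    have h1 : gv * w₂ ≤ W - v * w₁ := by rw [hgv]; exact Nat.div_mul_le_self _ _
    have := (Nat.cast_le (α := ℝ)).mpr h1
    rwa [Nat.cast_mul, Nat.cast_sub hv, Nat.cast_mul] at this
  have hw₂R : (0:ℝ) < w₂ := by exact_mod_cast hw₂
  have hw₁R : (0:ℝ) ≤ w₁ := by positivity
  have hBr : (B : ℝ) * w₂ ≤ (W : ℝ) - m * w₁ := by
    have t1 := mul_nonneg hs0 (sub_nonneg.mpr hguw)
    have t2 := mul_nonneg (show (0:ℝ) ≤ 1 - sθ by linarith) (sub_nonneg.mpr hgvw)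
    have t3 := mul_le_mul_of_nonneg_right HB hw₂R.le
    have t4 := mul_le_mul_of_nonneg_right hmR hw₁R
    ring_nf at t1 t2 t3 t4 ⊢
    linarith [t1, t2, t3, t4]
  have hBgm : B ≤ (gm : ℤ) := by
    have hfl : B ≤ ⌊((W : ℝ) - m * w₁) / w₂⌋ := by
      rw [Int.le_floor]
      rw [le_div_iff₀ hw₂R]
      exact hBr
    have hcast : ((W : ℝ) - m * w₁) = ((W - m * w₁ : ℕ) : ℝ) := by
      rw [Nat.cast_sub hmw, Nat.cast_mul]
    have hnn : (0:ℝ) ≤ ((W - m * w₁ : ℕ) : ℝ) / w₂ := by positivity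
    have : ⌊((W : ℝ) - m * w₁) / w₂⌋ = (gm : ℤ) := by
      rw [hcast, ← Int.natCast_floor_eq_floor hnn, hgm]
      norm_cast
      rw [Nat.floor_div_eq_div]
    omega
  have hAm : A ≤ (m : ℤ) := by rw [hm]; exact Int.self_le_toNat A
  -- now the integer inequalities
  have covers1 : q₁ ≤ k * u + j * v + m := by
    have : (q₁ : ℤ) ≤ (k : ℤ) * u + j * v + m := by rw [hA] at hAm; linarith
    exact_mod_cast this
  have covers2 : q₂ ≤ k * gu + j * gv + gm := by
    have : (q₂ : ℤ) ≤ (k : ℤ) * gu + j * gv + gm := by rw [hB] at hBgm; linarith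
    exact_mod_cast this
  -- build the Finsupp
  set pat : ℕ → (Fin 2 → ℕ) := fun p => ![p, (W - p * w₁) / w₂] with hpat
  have hpat0 : ∀ p, pat p 0 = p := fun p => rfl
  have hpat1 : ∀ p, pat p 1 = (W - p * w₁) / w₂ := fun p => rfl
  have hpatvalid : ∀ p, p * w₁ ≤ W → pat p 0 * w₁ + pat p 1 * w₂ ≤ W := by
    intro p hp
    rw [hpat0, hpat1]
    have := Nat.div_mul_le_self (W - p * w₁) w₂
    omega
  refine ⟨Finsupp.single (pat u) k + Finsupp.single (pat v) j + Finsupp.single (pat m) 1,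
    ?_, ?_, ?_, ?_⟩
  · intro a ha
    have h1 := Finsupp.support_add (g₁ := Finsupp.single (pat u) k + Finsupp.single (pat v) j)
      (g₂ := Finsupp.single (pat m) 1) ha
    rcases Finset.mem_union.mp h1 with h2 | h2
    · have h3 := Finsupp.support_add (g₁ := Finsupp.single (pat u) k)
        (g₂ := Finsupp.single (pat v) j) h2
      rcases Finset.mem_union.mp h3 with h4 | h4
      · have := Finsupp.support_single_subset h4
        rw [Finset.mem_singleton] at this; subst this
        exact hpatvalid u hu
      · have := Finsupp.support_single_subset h4
        rw [Finset.mem_singleton] at this; subst this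
        exact hpatvalid v hv
    · have := Finsupp.support_single_subset h2
      rw [Finset.mem_singleton] at this; subst this
      exact hpatvalid m hmw
  · rw [Finsupp.sum_add_index' (fun a => by simp) (fun a b₁ b₂ => by ring),
      Finsupp.sum_add_index' (fun a => by simp) (fun a b₁ b₂ => by ring),
      Finsupp.sum_single_index (by simp), Finsupp.sum_single_index (by simp),
      Finsupp.sum_single_index (by simp), hpat0, hpat0, hpat0]
    omega
  · rw [Finsupp.sum_add_index' (fun a => by simp) (fun a b₁ b₂ => by ring),
      Finsupp.sum_add_index' (fun a => by simp) (fun a b₁ b₂ => by ring),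
      Finsupp.sum_single_index (by simp), Finsupp.sum_single_index (by simp),
      Finsupp.sum_single_index (by simp), hpat1, hpat1, hpat1]
    calc q₂ ≤ k * gu + j * gv + gm := covers2
    _ = k * ((W - u * w₁) / w₂) + j * ((W - v * w₁) / w₂) + 1 * ((W - m * w₁) / w₂) := by
        rw [hgu, hgv, hgm]; ring
  · rw [Finsupp.sum_add_index' (fun a => by simp) (fun a b₁ b₂ => by ring),
      Finsupp.sum_add_index' (fun a => by simp) (fun a b₁ b₂ => by ring),
      Finsupp.sum_single_index (by simp), Finsupp.sum_single_index (by simp),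
      Finsupp.sum_single_index (by simp)]
    omega

set_option maxHeartbeats 2000000 in
theorem stmt15 (W w₁ w₂ q₁ q₂ : ℕ)
    (hw₁ : 0 < w₁) (hw₂ : 0 < w₂) (hW₁ : w₁ ≤ W) (hW₂ : w₂ ≤ W)
    (hq₁ : 0 < q₁) (hq₂ : 0 < q₂)
    (zLP : ℝ) (zstar : ℕ)
    (hLP : IsLeast {z : ℝ | ∃ x : (Fin 2 → ℕ) →₀ ℝ,
      (∀ a ∈ x.support, a 0 * w₁ + a 1 * w₂ ≤ W) ∧
      (∀ a, 0 ≤ x a) ∧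
      (q₁ : ℝ) ≤ x.sum (fun a c => c * (a 0 : ℝ)) ∧
      (q₂ : ℝ) ≤ x.sum (fun a c => c * (a 1 : ℝ)) ∧
      x.sum (fun _ c => c) = z} zLP)
    (hInt : IsLeast {n : ℕ | ∃ x : (Fin 2 → ℕ) →₀ ℕ,
      (∀ a ∈ x.support, a 0 * w₁ + a 1 * w₂ ≤ W) ∧
      q₁ ≤ x.sum (fun a c => c * a 0) ∧
      q₂ ≤ x.sum (fun a c => c * a 1) ∧
      x.sum (fun _ c => c) = n} zstar) :
    (zstar : ℤ) = ⌈zLP⌉ := by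
  classical
  obtain ⟨xR, hsupp, hnn, hc1, hc2, hsumR⟩ := hLP.1
  rw [Finsupp.sum] at hc1 hc2 hsumR
  have h0le : 0 ≤ zLP := by
    rw [← hsumR]; exact Finset.sum_nonneg (fun a _ => hnn a)
  set n : ℕ := (⌈zLP⌉).toNat with hndef
  clear_value n
  have hceil0 : (0:ℤ) ≤ ⌈zLP⌉ := Int.ceil_nonneg h0le
  have hnceil : (n : ℤ) = ⌈zLP⌉ := by rw [hndef]; exact Int.toNat_of_nonneg hceil0
  have hzlen : zLP ≤ (n:ℝ) := by
    have h := Int.le_ceil zLP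
    have : ((⌈zLP⌉ : ℤ) : ℝ) = (n : ℝ) := by rw [← hnceil]; push_cast; ring
    linarith [this ▸ h]
  -- Part A : ⌈zLP⌉ ≤ zstar
  obtain ⟨xI, hIsupp, hIc1, hIc2, hIsum⟩ := hInt.1
  have castsum : ∀ f : (Fin 2 → ℕ) → ℕ,
      (xI.mapRange (fun k : ℕ => (k:ℝ)) (by simp)).sum (fun a c => c * (f a : ℝ))
        = ((xI.sum fun a c => c * f a : ℕ) : ℝ) := by
    intro f
    rw [Finsupp.sum_mapRange_index (fun a => by simp)]
    rw [Finsupp.sum, Finsupp.sum, Nat.cast_sum]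
    exact Finset.sum_congr rfl fun a _ => by push_cast; ring
  have casttot : (xI.mapRange (fun k : ℕ => (k:ℝ)) (by simp)).sum (fun _ c => c)
      = ((xI.sum fun _ c => c : ℕ) : ℝ) := by
    rw [Finsupp.sum_mapRange_index (fun a => by simp)]
    rw [Finsupp.sum, Finsupp.sum, Nat.cast_sum]
  have hA : zLP ≤ (zstar : ℝ) := by
    apply hLP.2
    refine ⟨xI.mapRange (fun k : ℕ => (k:ℝ)) (by simp), ?_, ?_, ?_, ?_, ?_⟩
    · intro a ha; exact hIsupp a (Finsupp.support_mapRange ha)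
    · intro a; rw [Finsupp.mapRange_apply]; positivity
    · rw [castsum (fun a => a 0)]; exact_mod_cast hIc1
    · rw [castsum (fun a => a 1)]; exact_mod_cast hIc2
    · rw [casttot, hIsum]
  have hAceil : ⌈zLP⌉ ≤ (zstar : ℤ) := by
    apply Int.ceil_le.mpr; push_cast; exact hA
  -- positivity of zLP, so n ≥ 1
  have hzpos : 0 < zLP := by
    rcases lt_or_eq_of_le h0le with h | h
    · exact h
    · exfalso
      have hz : ∑ a ∈ xR.support, xR a = 0 := by rw [hsumR, ← h]
      have hall : ∀ a ∈ xR.support, xR a = 0 :=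
        (Finset.sum_eq_zero_iff_of_nonneg (fun a _ => hnn a)).mp hz
      have hzero : ∑ a ∈ xR.support, xR a * (a 0 : ℝ) = 0 :=
        Finset.sum_eq_zero (fun a ha => by rw [hall a ha]; ring)
      have hq₁R : (1:ℝ) ≤ (q₁:ℝ) := by exact_mod_cast hq₁
      rw [hzero] at hc1; linarith
  have hn1 : 1 ≤ n := by
    have h := Int.ceil_pos.mpr hzpos
    have h2 : (1:ℤ) ≤ (n:ℤ) := by rw [hnceil]; linarith
    exact_mod_cast h2
  have hnR : (0:ℝ) < (n:ℝ) := by exact_mod_cast hn1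
  -- Part B : build a fractional two-point certificate
  set p0 : Fin 2 → ℕ := fun _ => 0 with hp0
  set s : Finset (Fin 2 → ℕ) := insert p0 xR.support with hs
  set P₁ : (Fin 2 → ℕ) → ℝ := fun a => (a 0 : ℝ) with hP₁
  set P₂ : (Fin 2 → ℕ) → ℝ := fun a => (((W - a 0 * w₁) / w₂ : ℕ) : ℝ) with hP₂
  set cw : (Fin 2 → ℕ) → ℝ :=
    fun a => xR a / n + (if a = p0 then ((n:ℝ) - zLP)/n else 0) with hcw
  clear_value p0 s P₁ P₂ cw
  have hcnn : ∀ a ∈ s, 0 ≤ cw a := by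
    intro a _
    simp only [hcw]
    have h1 : 0 ≤ xR a / n := div_nonneg (hnn a) hnR.le
    by_cases hh : a = p0
    · rw [if_pos hh]
      have : 0 ≤ ((n:ℝ) - zLP)/n := div_nonneg (by linarith) hnR.le
      linarith
    · rw [if_neg hh]; linarith
  have hgen : ∀ F : (Fin 2 → ℕ) → ℝ, ∑ a ∈ s, xR a * F a = ∑ a ∈ xR.support, xR a * F a := by
    intro F
    by_cases hp : p0 ∈ xR.support
    · rw [hs, Finset.insert_eq_self.mpr hp]
    · rw [hs, Finset.sum_insert hp, Finsupp.notMem_support_iff.mp hp, zero_mul, zero_add]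
  have e1 : ∑ a ∈ s, xR a = zLP := by
    by_cases hp : p0 ∈ xR.support
    · rw [hs, Finset.insert_eq_self.mpr hp]; exact hsumR
    · rw [hs, Finset.sum_insert hp, Finsupp.notMem_support_iff.mp hp, zero_add]; exact hsumR
  have hitesum : ∀ r : ℝ, ∑ a ∈ s, (if a = p0 then r else 0) = r := by
    intro r
    rw [Finset.sum_ite_eq' s p0 (fun _ => r), if_pos (by rw [hs]; exact Finset.mem_insert_self _ _)]
  have hsum1 : ∑ a ∈ s, cw a = 1 := by
    rw [hcw]
    rw [Finset.sum_add_distrib, ← Finset.sum_div, e1, hitesum]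
    field_simp; ring
  have hcwsplit : ∀ F : (Fin 2 → ℕ) → ℝ,
      ∑ a ∈ s, cw a * F a = (∑ a ∈ s, xR a * F a)/n + ((n:ℝ) - zLP)/n * F p0 := by
    intro F
    simp only [hcw]
    have : ∀ a, (xR a / n + (if a = p0 then ((n:ℝ) - zLP)/n else 0)) * F a
        = xR a * F a / n + (if a = p0 then ((n:ℝ) - zLP)/n * F a else 0) := by
      intro a; by_cases hh : a = p0 <;> simp [hh] <;> ring
    rw [Finset.sum_congr rfl (fun a _ => this a), Finset.sum_add_distrib, ← Finset.sum_div]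
    congr 1
    rw [Finset.sum_ite_eq' s p0 (fun a => ((n:ℝ) - zLP)/n * F a),
      if_pos (by rw [hs]; exact Finset.mem_insert_self _ _)]
  have h1 : (q₁:ℝ)/n ≤ ∑ a ∈ s, cw a * P₁ a := by
    rw [hcwsplit P₁]
    have hP₁p0 : P₁ p0 = 0 := by simp only [hP₁, hp0]; norm_num
    rw [hP₁p0, mul_zero, add_zero, hgen P₁]
    have hle : (q₁:ℝ) ≤ ∑ a ∈ xR.support, xR a * P₁ a := by
      simp only [hP₁]; exact hc1
    gcongr
  have h2 : (q₂:ℝ)/n ≤ ∑ a ∈ s, cw a * P₂ a := by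
    rw [hcwsplit P₂, hgen P₂]
    have hP₂0 : 0 ≤ ((n:ℝ) - zLP)/n * P₂ p0 :=
      mul_nonneg (div_nonneg (by linarith) hnR.le) (by simp only [hP₂]; positivity)
    have hstep : ∑ a ∈ xR.support, xR a * (a 1 : ℝ) ≤ ∑ a ∈ xR.support, xR a * P₂ a := by
      apply Finset.sum_le_sum
      intro a ha
      apply mul_le_mul_of_nonneg_left ?_ (hnn a)
      simp only [hP₂]
      have hval := hsupp a ha
      have hle : a 1 ≤ (W - a 0 * w₁)/w₂ := (Nat.le_div_iff_mul_le hw₂).mpr (Nat.le_sub_of_add_le (by linarith [hval]))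
      exact_mod_cast hle
    have hle2 : (q₂:ℝ) ≤ ∑ a ∈ xR.support, xR a * P₂ a := le_trans hc2 hstep
    have hdiv : (q₂:ℝ)/n ≤ (∑ a ∈ xR.support, xR a * P₂ a)/n := by gcongr
    linarith
  obtain ⟨pa, hpas, pb, hpbs, p, qq, hp, hq, hpq, hh1, hh2⟩ :=
    reduceM s.card s cw P₁ P₂ ((q₁:ℝ)/n) ((q₂:ℝ)/n) le_rfl hcnn hsum1 h1 h2
  have hvalid : ∀ y ∈ s, y 0 * w₁ ≤ W := by
    intro y hy
    rw [hs] at hy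
    rcases Finset.mem_insert.mp hy with h | h
    · rw [h]; simp only [hp0]; simpa using Nat.zero_le W
    · exact le_trans (Nat.le_add_right _ _) (hsupp y h)
  have hqq : qq = 1 - p := by linarith
  have e₁ : (n:ℝ) * ((q₁:ℝ)/n) = q₁ := by field_simp
  have e₂ : (n:ℝ) * ((q₂:ℝ)/n) = q₂ := by field_simp
  have H1 : (q₁:ℝ) ≤ n * (p * (pa 0 : ℝ) + (1-p) * (pb 0 : ℝ)) := by
    have hm := mul_le_mul_of_nonneg_left hh1 hnR.le
    rw [e₁, hqq] at hm
    simpa only [hP₁] using hm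
  have H2 : (q₂:ℝ) ≤ n * (p * (((W - pa 0 * w₁)/w₂ : ℕ) : ℝ)
      + (1-p) * (((W - pb 0 * w₁)/w₂ : ℕ) : ℝ)) := by
    have hm := mul_le_mul_of_nonneg_left hh2 hnR.le
    rw [e₂, hqq] at hm
    simpa only [hP₂] using hm
  obtain ⟨x, hx1, hx2, hx3, hx4⟩ := constructSol W w₁ w₂ q₁ q₂ hw₁ hw₂ n (pa 0) (pb 0)
    hn1 (hvalid pa hpas) (hvalid pb hpbs) p hp (by linarith) H1 H2
  have hBle : zstar ≤ n := hInt.2 ⟨x, hx1, hx2, hx3, hx4⟩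
  have hBle' : (zstar:ℤ) ≤ (n:ℤ) := by exact_mod_cast hBle
  have hge : (n:ℤ) ≤ (zstar:ℤ) := by rw [hnceil]; exact hAceil
  rw [← hnceil]
  exact le_antisymm hBle' hge
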